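/- Formal duality is preserved under linear transformations: if periodic configurations P and Q in ℝⁿ are formal duals (P of density δ, Q of density 1/δ), and T : ℝⁿ → ℝⁿ is an invertible linear map, then TP and (Tᵀ)⁻¹Q are formal duals (with densities δ/|det T| and |det T|/δ respectively). -/

import Mathlib

open scoped Real
open Matrix

/-- The Fourier transform with kernel `e^{2πi⟨x,y⟩}`. -/
noncomputable def fourierT (n : ℕ) (f : (Fin n → ℝ) → ℂ) (y : Fin n → ℝ) : ℂ :=
  ∫ x : Fin n → ℝ, f x * Complex.exp ((2 * π * Complex.I) * ((∑ i, x i * y i : ℝ) : ℂ))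

/-- The average pair sum of `f` over the periodic configuration
`Λ+v₁,…,Λ+v_N` with `Λ = B ℤⁿ`. -/
noncomputable def avgPairSum (n N : ℕ) (B : Matrix (Fin n) (Fin n) ℝ)
    (v : Fin N → Fin n → ℝ) (f : (Fin n → ℝ) → ℂ) : ℂ :=
  (1 / (N : ℂ)) * ∑ j, ∑ k,
    ∑' z : Fin n → ℤ, f (B.mulVec (fun i => (z i : ℝ)) + v j - v k)

/-- Formal duality of two periodic configurations, with density ratio `δ`:
for every Schwartz function `f`, the average pair sum of `f` over the first
equals `δ` times the average pair sum of `f̂` over the second. -/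
def IsFormalDual (n N M : ℕ) (B : Matrix (Fin n) (Fin n) ℝ)
    (v : Fin N → Fin n → ℝ) (C : Matrix (Fin n) (Fin n) ℝ)
    (u : Fin M → Fin n → ℝ) (δ : ℝ) : Prop :=
  ∀ f : SchwartzMap (Fin n → ℝ) ℂ,
    avgPairSum n N B v f = (δ : ℂ) * avgPairSum n M C u (fourierT n f)

open MeasureTheory in
theorem fourier_comp_aux (n : ℕ) (T : Matrix (Fin n) (Fin n) ℝ) (hT : IsUnit T.det)
    (f : (Fin n → ℝ) → ℂ) (q : Fin n → ℝ) :
    fourierT n (fun x => f (T.mulVec x)) q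
      = ((|T.det|⁻¹ : ℝ) : ℂ) * fourierT n f ((Tᵀ)⁻¹.mulVec q) := by
  have hdet : T.det ≠ 0 := hT.ne_zero
  have hInv : Invertible T := T.invertibleOfIsUnitDet hT
  let e : (Fin n → ℝ) ≃L[ℝ] (Fin n → ℝ) := (T.toLinearEquiv' hInv).toContinuousLinearEquiv
  let φ := e.toHomeomorph
  have he : ∀ x, φ x = T.mulVec x := fun x => rfl
  have hdot : ∀ x : Fin n → ℝ,
      (∑ i, (T.mulVec x) i * ((Tᵀ)⁻¹.mulVec q) i) = ∑ i, x i * q i := by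
    intro x
    have h1 : (T.mulVec x) ⬝ᵥ ((Tᵀ)⁻¹.mulVec q) = x ⬝ᵥ q := by
      rw [← Matrix.vecMul_transpose, ← Matrix.dotProduct_mulVec, Matrix.mulVec_mulVec,
        Matrix.mul_nonsing_inv _ (by rwa [Matrix.det_transpose]), Matrix.one_mulVec]
    simpa [dotProduct] using h1
  have hmap : Measure.map φ volume = ENNReal.ofReal |T.det⁻¹| • volume := by
    have : Measure.map φ volume = Measure.map (Matrix.toLin' T) volume := rfl
    rw [this, Real.map_matrix_volume_pi_eq_smul_volume_pi hdet]
  calc fourierT n (fun x => f (T.mulVec x)) q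
      = ∫ x : Fin n → ℝ, (fun w => f w *
          Complex.exp ((2 * π * Complex.I) * ((∑ i, w i * ((Tᵀ)⁻¹.mulVec q) i : ℝ) : ℂ))) (φ x) := by
        unfold fourierT
        congr 1
        ext x
        simp only [he, hdot]
    _ = ∫ w, (fun w => f w *
          Complex.exp ((2 * π * Complex.I) * ((∑ i, w i * ((Tᵀ)⁻¹.mulVec q) i : ℝ) : ℂ))) w
          ∂(Measure.map φ volume) := by
          rw [φ.isClosedEmbedding.integral_map]
    _ = ((|T.det|⁻¹ : ℝ) : ℂ) * fourierT n f ((Tᵀ)⁻¹.mulVec q) := by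
        rw [hmap, integral_smul_measure, ENNReal.toReal_ofReal (abs_nonneg _), abs_inv]
        simp [fourierT, Complex.real_smul]

/-- Formal duality is preserved under invertible linear transformations:
if `P` (density `δ`) and `Q` (density `1/δ`) are formal duals and `T` is
invertible, then `TP` and `(Tᵀ)⁻¹Q` are formal duals with densities
`δ/|det T|` and `|det T|/δ`. -/
theorem formal_dual_linear_image (n N M : ℕ) (hN : 1 ≤ N) (hM : 1 ≤ M)
    (B C : Matrix (Fin n) (Fin n) ℝ) (hB : IsUnit B.det) (hC : IsUnit C.det)
    (v : Fin N → Fin n → ℝ) (u : Fin M → Fin n → ℝ) (δ : ℝ)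
    (hδ : δ = N / |B.det|) (hδ' : 1 / δ = M / |C.det|)
    (T : Matrix (Fin n) (Fin n) ℝ) (hT : IsUnit T.det)
    (hdual : IsFormalDual n N M B v C u δ) :
    IsFormalDual n N M (T * B) (fun j => T.mulVec (v j))
      ((Tᵀ)⁻¹ * C) (fun j => (Tᵀ)⁻¹.mulVec (u j)) (δ / |T.det|) := by
  intro f
  have hdet : T.det ≠ 0 := hT.ne_zero
  have habs : (|T.det| : ℝ) ≠ 0 := abs_ne_zero.mpr hdet
  have habsC : ((|T.det| : ℝ) : ℂ) ≠ 0 := by exact_mod_cast habs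
  have hInv : Invertible T := T.invertibleOfIsUnitDet hT
  let e : (Fin n → ℝ) ≃L[ℝ] (Fin n → ℝ) := (T.toLinearEquiv' hInv).toContinuousLinearEquiv
  let g : SchwartzMap (Fin n → ℝ) ℂ := SchwartzMap.compCLMOfContinuousLinearEquiv ℝ e f
  have hg : ∀ x, g x = f (T.mulVec x) := fun x => rfl
  -- Step A : left side
  have stepA : avgPairSum n N (T * B) (fun j => T.mulVec (v j)) f = avgPairSum n N B v g := by
    unfold avgPairSum
    congr 1
    refine Finset.sum_congr rfl fun j _ => Finset.sum_congr rfl fun k _ => tsum_congr fun z => ?_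
    rw [hg]
    congr 1
    rw [← Matrix.mulVec_mulVec, Matrix.mulVec_sub, Matrix.mulVec_add]
  -- Step B : right side
  have stepB : avgPairSum n M ((Tᵀ)⁻¹ * C) (fun j => (Tᵀ)⁻¹.mulVec (u j)) (fourierT n f)
      = ((|T.det| : ℝ) : ℂ) * avgPairSum n M C u (fourierT n g) := by
    unfold avgPairSum
    rw [mul_comm ((|T.det| : ℝ) : ℂ), mul_assoc]
    congr 1
    rw [Finset.sum_mul]
    refine Finset.sum_congr rfl fun j _ => ?_
    rw [Finset.sum_mul]
    refine Finset.sum_congr rfl fun k _ => ?_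
    rw [← tsum_mul_right]
    refine tsum_congr fun z => ?_
    have hpt : fourierT n g (C.mulVec (fun i => (z i : ℝ)) + u j - u k)
        = ((|T.det|⁻¹ : ℝ) : ℂ) * fourierT n f
            ((Tᵀ)⁻¹.mulVec (C.mulVec (fun i => (z i : ℝ)) + u j - u k)) := by
      have := fourier_comp_aux n T hT f (C.mulVec (fun i => (z i : ℝ)) + u j - u k)
      rw [← this]
      congr 1
    have harg : (Tᵀ)⁻¹.mulVec (C.mulVec (fun i => (z i : ℝ)) + u j - u k)
        = ((Tᵀ)⁻¹ * C).mulVec (fun i => (z i : ℝ))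
            + (Tᵀ)⁻¹.mulVec (u j) - (Tᵀ)⁻¹.mulVec (u k) := by
      rw [← Matrix.mulVec_mulVec, Matrix.mulVec_sub, Matrix.mulVec_add]
    rw [hpt, harg]
    field_simp
    rw [mul_assoc, ← Complex.ofReal_mul, one_div_mul_cancel habs, Complex.ofReal_one, mul_one]
  rw [stepA, stepB, hdual g]
  push_cast
  field_simp
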